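/- Let D = {(x_i, y_i)} be ranked items with ‖x_i‖ ≤ R, x_{i,d} = −1, and y_i ∈ {1,…,r}. If D is rank linearly separable by a unit-norm w = (w₁,…,w_r) with margin δ, then the online CuSum Rank algorithm satisfies Σ_{i=1}^{t} |y_i − ŷ_i| ≤ R²/δ² for every t. -/

import Mathlib

open scoped RealInnerProductSpace

/-- The sign function: `sgn m = 1` for `m ≥ 0` and `−1` for `m < 0` (so `sgn 0 = 1`). -/
noncomputable def sgn (m : ℤ) : ℝ := if 0 ≤ m then 1 else -1

/-- **Mistake bound for the online CuSum Rank algorithm.**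
Ranked items `(x i, y i)` with `‖x i‖ ≤ R`, last coordinate `−1`, ranks in `{1,…,r}`.
If the dataset is rank linearly separable by a unit-norm ensemble `(w̄₁,…,w̄_r)` with
margin `δ`, then the online CuSum Rank run satisfies
`∑_{i<t} |y i − ŷ i| ≤ R²/δ²` for every `t ≤ n`. -/
theorem cusum_rank_mistake_bound
    (d r n : ℕ) (x : ℕ → EuclideanSpace ℝ (Fin (d + 1))) (y : ℕ → ℕ)
    (R δ : ℝ) (hR : 0 < R) (hδ : 0 < δ)
    (hxnorm : ∀ i < n, ‖x i‖ ≤ R)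
    (hxlast : ∀ i < n, x i (Fin.last d) = -1)
    (hrank : ∀ i < n, y i ∈ Finset.Icc 1 r)
    -- rank linear separability with margin δ by a unit-norm ensemble
    (wbar : ℕ → EuclideanSpace ℝ (Fin (d + 1)))
    (hunit : ∑ k ∈ Finset.Icc 1 r, ‖wbar k‖ ^ 2 = 1)
    (hsep : ∀ i < n, ∀ k : ℕ, 2 ≤ k → k ≤ r →
      δ ≤ sgn ((y i : ℤ) - (k : ℤ)) * ⟪wbar k, x i⟫)
    -- the online CuSum Rank run
    (W : ℕ → ℕ → EuclideanSpace ℝ (Fin (d + 1))) (yhat : ℕ → ℕ)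
    (hW0 : ∀ k, W 0 k = 0)
    (hyhatmem : ∀ i < n, yhat i ∈ Finset.Icc 1 r)
    (hargmax : ∀ i < n, ∀ k ∈ Finset.Icc 1 r,
      ∑ j ∈ Finset.Icc 1 k, ⟪W i j, x i⟫ ≤ ∑ j ∈ Finset.Icc 1 (yhat i), ⟪W i j, x i⟫)
    (hupd : ∀ i < n, ∀ k : ℕ, W (i + 1) k =
      if min (y i) (yhat i) < k ∧ k ≤ max (y i) (yhat i) then
        W i k + sgn ((y i : ℤ) - (yhat i : ℤ)) • x i
      else W i k)
    (t : ℕ) (ht : t ≤ n) :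
    ∑ i ∈ Finset.range t, (|(y i : ℤ) - (yhat i : ℤ)| : ℝ) ≤ R ^ 2 / δ ^ 2 := by
  classical
  set M : ℕ → ℝ := fun t => ∑ i ∈ Finset.range t, (|(y i : ℤ) - (yhat i : ℤ)| : ℝ) with hMdef
  set Φ : ℕ → ℝ := fun t => ∑ k ∈ Finset.Icc 1 r, ⟪wbar k, W t k⟫ with hΦdef
  set N : ℕ → ℝ := fun t => ∑ k ∈ Finset.Icc 1 r, ‖W t k‖ ^ 2 with hNdef
  have key : ∀ t ≤ n, δ * M t ≤ Φ t ∧ N t ≤ R ^ 2 * M t := by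
    intro t htn
    induction t with
    | zero => simp [M, Φ, N, hW0]
    | succ i ih =>
      have hi : i < n := htn
      obtain ⟨ih1, ih2⟩ := ih (le_of_lt hi)
      obtain ⟨hy1, hyr⟩ := Finset.mem_Icc.mp (hrank i hi)
      obtain ⟨hh1, hhr⟩ := Finset.mem_Icc.mp (hyhatmem i hi)
      set a := min (y i) (yhat i) with hadef
      set b := max (y i) (yhat i) with hbdef
      set s := sgn ((y i : ℤ) - (yhat i : ℤ)) with hsdef
      have hab : a ≤ b := min_le_max
      have ha1 : 1 ≤ a := le_min hy1 hh1
      have hbr : b ≤ r := max_le hyr hhr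
      have hs2 : s ^ 2 = 1 := by
        simp only [s, sgn]; split <;> norm_num
      have hsub : Finset.Ioc a b ⊆ Finset.Icc 1 r := by
        intro k hk
        simp only [Finset.mem_Ioc, Finset.mem_Icc] at *
        omega
      -- margin for each updated coordinate
      have hsep' : ∀ k, a < k → k ≤ b → δ ≤ s * ⟪wbar k, x i⟫ := by
        intro k hak hkb
        have h2k : 2 ≤ k := by omega
        have hkr : k ≤ r := le_trans hkb hbr
        have hsame : s = sgn ((y i : ℤ) - (k : ℤ)) := by
          rcases le_or_gt (yhat i) (y i) with h | h
          · have hky : k ≤ y i := by omega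
            simp only [s, sgn, if_pos (show (0:ℤ) ≤ (y i : ℤ) - (yhat i : ℤ) by omega),
              if_pos (show (0:ℤ) ≤ (y i : ℤ) - (k : ℤ) by omega)]
          · have hky : y i < k := by omega
            simp only [s, sgn, if_neg (show ¬ (0:ℤ) ≤ (y i : ℤ) - (yhat i : ℤ) by omega),
              if_neg (show ¬ (0:ℤ) ≤ (y i : ℤ) - (k : ℤ) by omega)]
        rw [hsame]
        exact hsep i hi k h2k hkr
      -- cross term nonpositive
      have hcross : s * ((∑ j ∈ Finset.Icc 1 b, ⟪W i j, x i⟫)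
          - ∑ j ∈ Finset.Icc 1 a, ⟪W i j, x i⟫) ≤ 0 := by
        rcases lt_trichotomy (y i) (yhat i) with h | h | h
        · have hsval : s = -1 := by
            simp only [s, sgn, if_neg (show ¬ (0:ℤ) ≤ (y i : ℤ) - (yhat i : ℤ) by omega)]
          have ha' : a = y i := min_eq_left (le_of_lt h)
          have hb' : b = yhat i := max_eq_right (le_of_lt h)
          have := hargmax i hi (y i) (hrank i hi)
          rw [hsval, ha', hb']
          linarith
        · have : a = b := by omega
          rw [this]
          simp
        · have hsval : s = 1 := by
            simp only [s, sgn, if_pos (show (0:ℤ) ≤ (y i : ℤ) - (yhat i : ℤ) by omega)]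
          have ha' : a = yhat i := min_eq_right (le_of_lt h)
          have hb' : b = y i := max_eq_left (le_of_lt h)
          have := hargmax i hi (y i) (hrank i hi)
          rw [hsval, ha', hb']
          linarith
      -- |y - yhat| equals b - a
      have habs : (|(y i : ℤ) - (yhat i : ℤ)| : ℝ) = ((b - a : ℕ) : ℝ) := by
        have : ((b - a : ℕ) : ℤ) = |(y i : ℤ) - (yhat i : ℤ)| := by
          rcases le_total (y i) (yhat i) with h | h
          · rw [abs_of_nonpos (by omega : (y i : ℤ) - (yhat i : ℤ) ≤ 0)]
            have ha' : a = y i := min_eq_left h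
            have hb' : b = yhat i := max_eq_right h
            omega
          · rw [abs_of_nonneg (by omega : (0:ℤ) ≤ (y i : ℤ) - (yhat i : ℤ))]
            have ha' : a = yhat i := min_eq_right h
            have hb' : b = y i := max_eq_left h
            omega
        exact_mod_cast congrArg (fun z : ℤ => (z : ℝ)) this.symm
      -- Φ step
      have hΦstep : Φ (i + 1) = Φ i + ∑ k ∈ Finset.Ioc a b, s * ⟪wbar k, x i⟫ := by
        have hterm : ∀ k ∈ Finset.Icc 1 r, ⟪wbar k, W (i + 1) k⟫
            = ⟪wbar k, W i k⟫ + (if k ∈ Finset.Ioc a b then s * ⟪wbar k, x i⟫ else 0) := by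
          intro k _
          rw [hupd i hi k]
          by_cases hk : a < k ∧ k ≤ b
          · rw [if_pos hk, if_pos (Finset.mem_Ioc.mpr hk), inner_add_right,
              real_inner_smul_right]
          · rw [if_neg hk, if_neg (fun hmem => hk (Finset.mem_Ioc.mp hmem)), add_zero]
        simp only [Φ]
        rw [Finset.sum_congr rfl hterm, Finset.sum_add_distrib, Finset.sum_ite_mem,
          Finset.inter_eq_right.mpr hsub]
      have hΦge : Φ i + δ * ((b - a : ℕ) : ℝ) ≤ Φ (i + 1) := by
        rw [hΦstep]
        have := Finset.card_nsmul_le_sum (Finset.Ioc a b)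
          (fun k => s * ⟪wbar k, x i⟫) δ (fun k hk => by
            obtain ⟨h1, h2⟩ := Finset.mem_Ioc.mp hk
            exact hsep' k h1 h2)
        rw [nsmul_eq_mul, Nat.card_Ioc] at this
        linarith [this]
      -- N step
      have hNstep : N (i + 1) = N i
          + ∑ k ∈ Finset.Ioc a b, (2 * (s * ⟪W i k, x i⟫) + ‖x i‖ ^ 2) := by
        have hterm : ∀ k ∈ Finset.Icc 1 r, ‖W (i + 1) k‖ ^ 2
            = ‖W i k‖ ^ 2 + (if k ∈ Finset.Ioc a b then
                2 * (s * ⟪W i k, x i⟫) + ‖x i‖ ^ 2 else 0) := by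
          intro k _
          rw [hupd i hi k]
          by_cases hk : a < k ∧ k ≤ b
          · rw [if_pos hk, if_pos (Finset.mem_Ioc.mpr hk), norm_add_sq_real,
              real_inner_smul_right, norm_smul, Real.norm_eq_abs, mul_pow, sq_abs, hs2, one_mul]
            ring
          · rw [if_neg hk, if_neg (fun hmem => hk (Finset.mem_Ioc.mp hmem)), add_zero]
        simp only [N]
        rw [Finset.sum_congr rfl hterm, Finset.sum_add_distrib, Finset.sum_ite_mem,
          Finset.inter_eq_right.mpr hsub]
      have hsplit : ∑ j ∈ Finset.Ioc a b, ⟪W i j, x i⟫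
          = (∑ j ∈ Finset.Icc 1 b, ⟪W i j, x i⟫) - ∑ j ∈ Finset.Icc 1 a, ⟪W i j, x i⟫ := by
        have h0a : (0:ℕ) ≤ a := Nat.zero_le a
        have := Finset.sum_Ioc_consecutive (fun j => ⟪W i j, x i⟫) h0a hab
        rw [← Finset.Icc_add_one_left_eq_Ioc 0 a, ← Finset.Icc_add_one_left_eq_Ioc 0 b, zero_add] at this
        linarith [this]
      have hNle : N (i + 1) ≤ N i + ((b - a : ℕ) : ℝ) * R ^ 2 := by
        rw [hNstep]
        have hsum : ∑ k ∈ Finset.Ioc a b, (2 * (s * ⟪W i k, x i⟫) + ‖x i‖ ^ 2)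
            = 2 * (s * ((∑ j ∈ Finset.Icc 1 b, ⟪W i j, x i⟫)
                - ∑ j ∈ Finset.Icc 1 a, ⟪W i j, x i⟫))
              + ((b - a : ℕ) : ℝ) * ‖x i‖ ^ 2 := by
          rw [Finset.sum_add_distrib, ← Finset.mul_sum, ← Finset.mul_sum, hsplit,
            Finset.sum_const, nsmul_eq_mul, Nat.card_Ioc]
        rw [hsum]
        have hx2 : ‖x i‖ ^ 2 ≤ R ^ 2 := by
          have := hxnorm i hi
          nlinarith [norm_nonneg (x i)]
        have hca : (0:ℝ) ≤ ((b - a : ℕ) : ℝ) := Nat.cast_nonneg _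
        nlinarith [hcross]
      -- combine
      have hMstep : M (i + 1) = M i + (|(y i : ℤ) - (yhat i : ℤ)| : ℝ) := by
        simp [M, Finset.sum_range_succ]
      constructor
      · rw [hMstep, habs]
        calc δ * (M i + ((b - a : ℕ) : ℝ)) = δ * M i + δ * ((b - a : ℕ) : ℝ) := by ring
          _ ≤ Φ i + δ * ((b - a : ℕ) : ℝ) := by linarith
          _ ≤ Φ (i + 1) := hΦge
      · rw [hMstep, habs]
        calc N (i + 1) ≤ N i + ((b - a : ℕ) : ℝ) * R ^ 2 := hNle
          _ ≤ R ^ 2 * M i + ((b - a : ℕ) : ℝ) * R ^ 2 := by linarith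
          _ = R ^ 2 * (M i + ((b - a : ℕ) : ℝ)) := by ring
  obtain ⟨h1, h2⟩ := key t ht
  have hm0 : 0 ≤ M t := Finset.sum_nonneg fun i _ => by positivity
  have hΦle : Φ t ≤ ∑ k ∈ Finset.Icc 1 r, ‖wbar k‖ * ‖W t k‖ :=
    Finset.sum_le_sum fun k _ => real_inner_le_norm _ _
  have hCS : (∑ k ∈ Finset.Icc 1 r, ‖wbar k‖ * ‖W t k‖) ^ 2
      ≤ (∑ k ∈ Finset.Icc 1 r, ‖wbar k‖ ^ 2) * ∑ k ∈ Finset.Icc 1 r, ‖W t k‖ ^ 2 :=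
    Finset.sum_mul_sq_le_sq_mul_sq _ _ _
  rw [hunit, one_mul] at hCS
  have hPnonneg : 0 ≤ ∑ k ∈ Finset.Icc 1 r, ‖wbar k‖ * ‖W t k‖ :=
    le_trans (by positivity) h1 |>.trans hΦle
  have hsq : (δ * M t) ^ 2 ≤ R ^ 2 * M t := by
    have h3 : δ * M t ≤ ∑ k ∈ Finset.Icc 1 r, ‖wbar k‖ * ‖W t k‖ := le_trans h1 hΦle
    have h4 : (δ * M t) ^ 2 ≤ (∑ k ∈ Finset.Icc 1 r, ‖wbar k‖ * ‖W t k‖) ^ 2 := by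
      have : 0 ≤ δ * M t := by positivity
      nlinarith
    calc (δ * M t) ^ 2 ≤ (∑ k ∈ Finset.Icc 1 r, ‖wbar k‖ * ‖W t k‖) ^ 2 := h4
      _ ≤ ∑ k ∈ Finset.Icc 1 r, ‖W t k‖ ^ 2 := hCS
      _ = N t := rfl
      _ ≤ R ^ 2 * M t := h2
  show M t ≤ R ^ 2 / δ ^ 2
  rcases eq_or_lt_of_le hm0 with h | h
  · rw [← h]; positivity
  · rw [le_div_iff₀ (by positivity)]
    nlinarith
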